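/- In the Thompson group T presented by generators α, β with relations α⁴ = 1, β³ = 1, (βα)⁵ = 1, [βαβ, α²βαβα²] = 1, and [βαβ, α²β²α²βαβα²βα²] = 1, the elements A = βα², B = β²α, C = β² satisfy the Thompson group relations [AB⁻¹, A⁻¹BA] = 1 and [AB⁻¹, A⁻²BA²] = 1. -/

import Mathlib

namespace Stmt0

open scoped commutatorElement

/-- The generator `α` in the free group. -/
def ga : FreeGroup (Fin 2) := FreeGroup.of 0
/-- The generator `β` in the free group. -/
def gb : FreeGroup (Fin 2) := FreeGroup.of 1

/-- Relations of the Ptolemy-Thompson group `T`. -/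
def Trels : Set (FreeGroup (Fin 2)) :=
  {ga ^ 4, gb ^ 3, (gb * ga) ^ 5,
   ⁅gb * ga * gb, ga ^ 2 * gb * ga * gb * ga ^ 2⁆,
   ⁅gb * ga * gb, ga ^ 2 * gb ^ 2 * ga ^ 2 * gb * ga * gb * ga ^ 2 * gb * ga ^ 2⁆}

/-- The Ptolemy-Thompson group `T`. -/
abbrev T := PresentedGroup Trels

theorem thompson_F_relations_hold :
    let α : T := PresentedGroup.of 0
    let β : T := PresentedGroup.of 1
    let A : T := β * α ^ 2
    let B : T := β ^ 2 * α
    ⁅A * B⁻¹, A⁻¹ * B * A⁆ = 1 ∧ ⁅A * B⁻¹, A⁻¹ ^ 2 * B * A ^ 2⁆ = 1 := by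
  intro α β A B
  have hrel : ∀ r ∈ Trels, PresentedGroup.mk Trels r = 1 := fun r hr =>
    (QuotientGroup.eq_one_iff r).mpr (Subgroup.subset_normalClosure hr)
  have hα : α ^ 4 = 1 := by
    have := hrel (ga ^ 4) (by simp [Trels])
    simp [ga, map_pow] at this; exact this
  have hβ : β ^ 3 = 1 := by
    have := hrel (gb ^ 3) (by simp [Trels])
    simp [gb, map_pow] at this; exact this
  have hc1 : ⁅β * α * β, α ^ 2 * β * α * β * α ^ 2⁆ = 1 := by
    have := hrel ⁅gb * ga * gb, ga ^ 2 * gb * ga * gb * ga ^ 2⁆ (by simp [Trels])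
    simp [ga, gb, map_commutatorElement, map_pow, map_mul] at this; exact this
  have hc2 : ⁅β * α * β, α ^ 2 * β ^ 2 * α ^ 2 * β * α * β * α ^ 2 * β * α ^ 2⁆ = 1 := by
    have := hrel ⁅gb * ga * gb, ga ^ 2 * gb ^ 2 * ga ^ 2 * gb * ga * gb * ga ^ 2 * gb * ga ^ 2⁆
      (by simp [Trels])
    simp [ga, gb, map_commutatorElement, map_pow, map_mul] at this; exact this
  have ha2 : (α ^ 2)⁻¹ = α ^ 2 := inv_eq_of_mul_eq_one_right (by rw [← pow_add]; exact hα)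
  have hbinv : β⁻¹ = β ^ 2 := inv_eq_of_mul_eq_one_right (by rw [← pow_succ']; exact hβ)
  have hb2 : (β ^ 2)⁻¹ = β := inv_eq_of_mul_eq_one_right (by rw [← pow_succ]; exact hβ)
  have e1 : A * B⁻¹ = β * α * β := by
    show β * α ^ 2 * (β ^ 2 * α)⁻¹ = β * α * β
    rw [mul_inv_rev, hb2]; group
  have e2 : A⁻¹ * B * A = α ^ 2 * β * α * β * α ^ 2 := by
    show (β * α ^ 2)⁻¹ * (β ^ 2 * α) * (β * α ^ 2) = α ^ 2 * β * α * β * α ^ 2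
    have : (β * α ^ 2)⁻¹ * (β ^ 2 * α) * (β * α ^ 2)
        = (α ^ 2)⁻¹ * β * α * β * α ^ 2 := by group
    rw [this, ha2]
  have e3 : A⁻¹ ^ 2 * B * A ^ 2 = α ^ 2 * β ^ 2 * α ^ 2 * β * α * β * α ^ 2 * β * α ^ 2 := by
    show (β * α ^ 2)⁻¹ ^ 2 * (β ^ 2 * α) * (β * α ^ 2) ^ 2
        = α ^ 2 * β ^ 2 * α ^ 2 * β * α * β * α ^ 2 * β * α ^ 2
    have : (β * α ^ 2)⁻¹ ^ 2 * (β ^ 2 * α) * (β * α ^ 2) ^ 2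
        = (α ^ 2)⁻¹ * β⁻¹ * (α ^ 2)⁻¹ * β * α * β * α ^ 2 * β * α ^ 2 := by
      rw [sq (β * α ^ 2)⁻¹, sq (β * α ^ 2)]; group
    rw [this, ha2, hbinv]
  exact ⟨by rw [e1, e2]; exact hc1, by rw [e1, e3]; exact hc2⟩

end Stmt0
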